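/- For n = 1 and V(x) = 1/(1+x²), the averaged function is V^ave(z) = (1/2π)∫₀^{2π} (1 + (|z|²/2)(1 + cos 2t))^{-1} dt, and V^ave(z) is NOT O(1/|z|²) as |z| → ∞; in fact |z|² · V^ave(z) → ∞ as |z| → ∞. -/

import Mathlib

open scoped Real
open Filter

/-- The harmonic-oscillator average of `V : ℝ → ℝ` in the complex phase-space
coordinate `z = x + ip`. -/
noncomputable def ave1 (V : ℝ → ℝ) (z : ℂ) : ℝ :=
  (1 / (2 * Real.pi)) *
    ∫ t in (0:ℝ)..(2 * Real.pi), V ((Complex.exp (Complex.I * t) * z).re)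

/-- Auxiliary function `t ↦ (1 + a cos² t)⁻¹`. -/
noncomputable def gfun (a t : ℝ) : ℝ := (1 + a * Real.cos t ^ 2)⁻¹

lemma gfun_denom_pos {a : ℝ} (ha : 0 ≤ a) (t : ℝ) : 0 < 1 + a * Real.cos t ^ 2 := by
  nlinarith [sq_nonneg (Real.cos t), mul_nonneg ha (sq_nonneg (Real.cos t))]

lemma gfun_cont {a : ℝ} (ha : 0 ≤ a) : Continuous (gfun a) := by
  apply Continuous.inv₀
  · continuity
  · exact fun t => (gfun_denom_pos ha t).ne'

lemma gfun_nonneg {a : ℝ} (ha : 0 ≤ a) (t : ℝ) : 0 ≤ gfun a t :=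
  inv_nonneg.2 (gfun_denom_pos ha t).le

lemma gfun_periodic (a : ℝ) : Function.Periodic (gfun a) (2 * Real.pi) := fun t => by
  simp [gfun, Real.cos_add_two_pi]

lemma integrand_re (z : ℂ) (t : ℝ) :
    (Complex.exp (Complex.I * t) * z).re =
      ‖z‖ * Real.cos (t + Complex.arg z) := by
  rw [Real.cos_add, mul_comm Complex.I]
  simp only [Complex.mul_re, Complex.exp_ofReal_mul_I_re, Complex.exp_ofReal_mul_I_im]
  have hc := Complex.norm_mul_cos_arg z
  have hs := Complex.norm_mul_sin_arg z
  linear_combination (-Real.cos t) * hc + Real.sin t * hs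

lemma integrand_eq (z : ℂ) (t : ℝ) :
    (1 + ((Complex.exp (Complex.I * t) * z).re) ^ 2)⁻¹ =
      gfun (‖z‖ ^ 2) (t + Complex.arg z) := by
  rw [integrand_re, gfun, mul_pow]

lemma integrand_eq' (a t : ℝ) :
    (1 + a / 2 * (1 + Real.cos (2 * t)))⁻¹ = gfun a t := by
  rw [gfun, Real.cos_two_mul]; ring_nf

lemma shift_integral {a : ℝ} (ha : 0 ≤ a) (θ : ℝ) :
    ∫ t in (0:ℝ)..(2 * Real.pi), gfun a (t + θ) =
      ∫ t in (0:ℝ)..(2 * Real.pi), gfun a t := by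
  rw [intervalIntegral.integral_comp_add_right (gfun a) θ]
  have := (gfun_periodic a).intervalIntegral_add_eq θ 0
  simpa [add_comm, zero_add] using this

lemma part1 (z : ℂ) : ave1 (fun x => 1 / (1 + x ^ 2)) z =
    (1 / (2 * Real.pi)) *
      ∫ t in (0:ℝ)..(2 * Real.pi),
        (1 + (‖z‖ ^ 2 / 2) * (1 + Real.cos (2 * t)))⁻¹ := by
  have ha : (0:ℝ) ≤ ‖z‖ ^ 2 := sq_nonneg _
  rw [ave1]
  congr 1
  calc ∫ t in (0:ℝ)..(2 * Real.pi),
        (fun x => 1 / (1 + x ^ 2)) ((Complex.exp (Complex.I * t) * z).re)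
      = ∫ t in (0:ℝ)..(2 * Real.pi), gfun (‖z‖ ^ 2) (t + Complex.arg z) := by
        apply intervalIntegral.integral_congr
        intro t _
        simp only [one_div]
        exact integrand_eq z t
    _ = ∫ t in (0:ℝ)..(2 * Real.pi), gfun (‖z‖ ^ 2) t := shift_integral ha _
    _ = ∫ t in (0:ℝ)..(2 * Real.pi),
          (1 + (‖z‖ ^ 2 / 2) * (1 + Real.cos (2 * t)))⁻¹ := by
        apply intervalIntegral.integral_congr
        intro t _
        exact (integrand_eq' _ t).symm

lemma hfun_cont {a : ℝ} (ha : 0 ≤ a) :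
    Continuous (fun t : ℝ => (1 + a * (t - Real.pi / 2) ^ 2)⁻¹) := by
  apply Continuous.inv₀
  · continuity
  · intro t
    nlinarith [mul_nonneg ha (sq_nonneg (t - Real.pi / 2))]

lemma hfun_integral {a : ℝ} (ha : 0 < a) :
    ∫ t in (0:ℝ)..Real.pi, (1 + a * (t - Real.pi / 2) ^ 2)⁻¹ =
      2 * Real.arctan (Real.sqrt a * (Real.pi / 2)) / Real.sqrt a := by
  have hsa : 0 < Real.sqrt a := Real.sqrt_pos.2 ha
  have hsq : Real.sqrt a ^ 2 = a := Real.sq_sqrt ha.le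
  have hderiv : ∀ t ∈ Set.uIcc (0:ℝ) Real.pi,
      HasDerivAt (fun t => Real.arctan (Real.sqrt a * (t - Real.pi / 2)) / Real.sqrt a)
        ((1 + a * (t - Real.pi / 2) ^ 2)⁻¹) t := by
    intro t _
    have h1 : HasDerivAt (fun t : ℝ => Real.sqrt a * (t - Real.pi / 2)) (Real.sqrt a) t := by
      simpa using ((hasDerivAt_id t).sub_const (Real.pi / 2)).const_mul (Real.sqrt a)
    have h2 := ((Real.hasDerivAt_arctan (Real.sqrt a * (t - Real.pi / 2))).comp t h1).div_const
      (Real.sqrt a)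
    refine h2.congr_deriv ?_
    have hpos : 0 < 1 + a * (t - Real.pi / 2) ^ 2 := by
      nlinarith [mul_nonneg ha.le (sq_nonneg (t - Real.pi / 2))]
    rw [mul_pow, hsq]
    field_simp
  rw [intervalIntegral.integral_eq_sub_of_hasDerivAt hderiv
    ((hfun_cont ha.le).intervalIntegrable _ _)]
  have : Real.pi - Real.pi / 2 = Real.pi / 2 := by ring
  rw [this]
  have : (0:ℝ) - Real.pi / 2 = -(Real.pi / 2) := by ring
  rw [this, mul_neg, Real.arctan_neg]
  ring

lemma lower_bound {a : ℝ} (ha : 1 ≤ a) :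
    Real.sqrt a / 4 ≤ a / (2 * Real.pi) * ∫ t in (0:ℝ)..(2 * Real.pi), gfun a t := by
  have ha0 : (0:ℝ) < a := lt_of_lt_of_le one_pos ha
  have hpi := Real.pi_pos
  have hsa : 0 < Real.sqrt a := Real.sqrt_pos.2 ha0
  have hgi : ∀ c d : ℝ, IntervalIntegrable (gfun a) MeasureTheory.volume c d :=
    fun c d => (gfun_cont ha0.le).intervalIntegrable c d
  -- split [0,2π] = [0,π] ∪ [π,2π]
  have hsplit : ∫ t in (0:ℝ)..(2 * Real.pi), gfun a t =
      (∫ t in (0:ℝ)..Real.pi, gfun a t) + ∫ t in Real.pi..(2 * Real.pi), gfun a t :=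
    (intervalIntegral.integral_add_adjacent_intervals (hgi _ _) (hgi _ _)).symm
  have h2 : 0 ≤ ∫ t in Real.pi..(2 * Real.pi), gfun a t :=
    intervalIntegral.integral_nonneg (by linarith) (fun t _ => gfun_nonneg ha0.le t)
  -- compare with the arctan integrand on [0,π]
  have hcmp : ∫ t in (0:ℝ)..Real.pi, (1 + a * (t - Real.pi / 2) ^ 2)⁻¹ ≤
      ∫ t in (0:ℝ)..Real.pi, gfun a t := by
    apply intervalIntegral.integral_mono_on (by linarith)
      ((hfun_cont ha0.le).intervalIntegrable _ _) (hgi _ _)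
    intro t _
    have hc : Real.cos t ^ 2 ≤ (t - Real.pi / 2) ^ 2 := by
      have h1 : Real.cos t ^ 2 = Real.sin (t - Real.pi / 2) ^ 2 := by
        rw [Real.sin_sub_pi_div_two]; ring
      rw [h1]; exact Real.sin_sq_le_sq
    have hpos := gfun_denom_pos ha0.le t
    rw [gfun]
    apply inv_anti₀ hpos
    nlinarith
  have harctan : Real.pi / 4 ≤ Real.arctan (Real.sqrt a * (Real.pi / 2)) := by
    have h1 : (1:ℝ) ≤ Real.sqrt a * (Real.pi / 2) := by
      have : (1:ℝ) ≤ Real.sqrt a := by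
        rw [show (1:ℝ) = Real.sqrt 1 by simp]
        exact Real.sqrt_le_sqrt ha
      nlinarith [Real.pi_gt_three]
    calc Real.pi / 4 = Real.arctan 1 := Real.arctan_one.symm
      _ ≤ _ := Real.arctan_strictMono.monotone h1
  have hI : Real.pi / (2 * Real.sqrt a) ≤ ∫ t in (0:ℝ)..(2 * Real.pi), gfun a t := by
    rw [hsplit]
    have := hfun_integral ha0
    have h3 : Real.pi / (2 * Real.sqrt a) ≤
        ∫ t in (0:ℝ)..Real.pi, (1 + a * (t - Real.pi / 2) ^ 2)⁻¹ := by
      rw [this]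
      rw [div_le_div_iff₀ (by positivity) hsa]
      nlinarith
    linarith
  have hkey : a / (2 * Real.pi) * (Real.pi / (2 * Real.sqrt a)) = Real.sqrt a / 4 := by
    have : Real.sqrt a * Real.sqrt a = a := Real.mul_self_sqrt ha0.le
    field_simp
    nlinarith
  calc Real.sqrt a / 4 = a / (2 * Real.pi) * (Real.pi / (2 * Real.sqrt a)) := hkey.symm
    _ ≤ a / (2 * Real.pi) * ∫ t in (0:ℝ)..(2 * Real.pi), gfun a t := by
        apply mul_le_mul_of_nonneg_left hI (by positivity)

/-- For `V(x) = 1/(1+x²)` in one dimension, the average has the explicit integral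
formula `(1/2π)∫₀^{2π} (1 + (|z|²/2)(1+cos 2t))⁻¹ dt`, and it is *not* `O(1/|z|²)`:
in fact `|z|² V^ave(z) → ∞` as `|z| → ∞`. -/
theorem average_one_over_one_plus_sq :
    (∀ z : ℂ, ave1 (fun x => 1 / (1 + x ^ 2)) z =
      (1 / (2 * Real.pi)) *
        ∫ t in (0:ℝ)..(2 * Real.pi),
          (1 + (‖z‖ ^ 2 / 2) * (1 + Real.cos (2 * t)))⁻¹) ∧
    Tendsto (fun z : ℂ => ‖z‖ ^ 2 * ave1 (fun x => 1 / (1 + x ^ 2)) z)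
      (Filter.cocompact ℂ) Filter.atTop := by
  refine ⟨part1, ?_⟩
  have hpi := Real.pi_pos
  have hnorm : Tendsto (fun z : ℂ => ‖z‖) (Filter.cocompact ℂ) Filter.atTop := by
    simpa using (tendsto_norm_cocompact_atTop (E := ℂ))
  have h4 : Tendsto (fun z : ℂ => ‖z‖ / 4) (Filter.cocompact ℂ) Filter.atTop :=
    hnorm.atTop_div_const (by norm_num)
  apply tendsto_atTop_mono' _ _ h4
  filter_upwards [hnorm.eventually_ge_atTop 1] with z hz
  have ha : (1:ℝ) ≤ ‖z‖ ^ 2 := by nlinarith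
  have hsq : Real.sqrt (‖z‖ ^ 2) = ‖z‖ :=
    Real.sqrt_sq (norm_nonneg z)
  have h1 := part1 z
  have h2 : ave1 (fun x => 1 / (1 + x ^ 2)) z =
      (1 / (2 * Real.pi)) * ∫ t in (0:ℝ)..(2 * Real.pi), gfun (‖z‖ ^ 2) t := by
    rw [h1]
    congr 1
    apply intervalIntegral.integral_congr
    intro t _
    exact integrand_eq' _ t
  rw [h2]
  have := lower_bound ha
  rw [hsq] at this
  calc ‖z‖ / 4 ≤
      ‖z‖ ^ 2 / (2 * Real.pi) *
        ∫ t in (0:ℝ)..(2 * Real.pi), gfun (‖z‖ ^ 2) t := this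
    _ = ‖z‖ ^ 2 *
        ((1 / (2 * Real.pi)) * ∫ t in (0:ℝ)..(2 * Real.pi), gfun (‖z‖ ^ 2) t) := by
        ring
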